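/- Let Ω ⊂ R^n be a compact convex set with nonempty interior and let u_k, u be closed convex functions with dom u_k = dom u = Ω and |u_k| ≤ M, |u| ≤ M on Ω. If u_k(x) → u(x) for every x in the interior of Ω, then the epigraphs of u_k converge to the epigraph of u in the sense of Kuratowski: Li epi u_k = Ls epi u_k = epi u. -/

import Mathlib

open Filter

/-- Pointwise convergence on `Int Ω` of uniformly bounded closed convex functions with common
effective domain `Ω` (a compact convex set with nonempty interior) implies Kuratowski
convergence of epigraphs: `Li epi u_k = Ls epi u_k = epi u`. -/
theorem epigraphs_kuratowski_converge {n : ℕ} (Ω : Set (EuclideanSpace ℝ (Fin n)))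
    (hΩcomp : IsCompact Ω) (hΩconv : Convex ℝ Ω) (hΩint : (interior Ω).Nonempty)
    (M : ℝ) (u : ℕ → EuclideanSpace ℝ (Fin n) → ℝ) (v : EuclideanSpace ℝ (Fin n) → ℝ)
    (hepiu : ∀ k, IsClosed {z : EuclideanSpace ℝ (Fin n) × ℝ | z.1 ∈ Ω ∧ u k z.1 ≤ z.2} ∧
      Convex ℝ {z : EuclideanSpace ℝ (Fin n) × ℝ | z.1 ∈ Ω ∧ u k z.1 ≤ z.2})
    (hepiv : IsClosed {z : EuclideanSpace ℝ (Fin n) × ℝ | z.1 ∈ Ω ∧ v z.1 ≤ z.2} ∧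
      Convex ℝ {z : EuclideanSpace ℝ (Fin n) × ℝ | z.1 ∈ Ω ∧ v z.1 ≤ z.2})
    (hbdu : ∀ k, ∀ x ∈ Ω, |u k x| ≤ M) (hbdv : ∀ x ∈ Ω, |v x| ≤ M)
    (hlim : ∀ x ∈ interior Ω, Tendsto (fun k => u k x) atTop (nhds (v x))) :
    {z : EuclideanSpace ℝ (Fin n) × ℝ |
        limsup (fun k => EMetric.infEdist z {w : EuclideanSpace ℝ (Fin n) × ℝ |
          w.1 ∈ Ω ∧ u k w.1 ≤ w.2}) atTop = 0} =
      {z : EuclideanSpace ℝ (Fin n) × ℝ | z.1 ∈ Ω ∧ v z.1 ≤ z.2} ∧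
    {z : EuclideanSpace ℝ (Fin n) × ℝ |
        liminf (fun k => EMetric.infEdist z {w : EuclideanSpace ℝ (Fin n) × ℝ |
          w.1 ∈ Ω ∧ u k w.1 ≤ w.2}) atTop = 0} =
      {z : EuclideanSpace ℝ (Fin n) × ℝ | z.1 ∈ Ω ∧ v z.1 ≤ z.2} := by
  set E : ℕ → Set (EuclideanSpace ℝ (Fin n) × ℝ) :=
    fun k => {w : EuclideanSpace ℝ (Fin n) × ℝ | w.1 ∈ Ω ∧ u k w.1 ≤ w.2} with hE
  set F : Set (EuclideanSpace ℝ (Fin n) × ℝ) :=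
    {z : EuclideanSpace ℝ (Fin n) × ℝ | z.1 ∈ Ω ∧ v z.1 ≤ z.2} with hF
  obtain ⟨x₀, hx₀⟩ := hΩint
  have hx₀Ω : x₀ ∈ Ω := interior_subset hx₀
  -- Part A : points of `F` are limits of points of `E k`
  have keyA : ∀ z ∈ F, Tendsto (fun k => EMetric.infEdist z (E k)) atTop (nhds 0) := by
    rintro ⟨x, a⟩ ⟨hxΩ, hva⟩
    rw [ENNReal.tendsto_nhds_zero]
    intro ε hε
    obtain ⟨δ, hδ0, hδε⟩ : ∃ δ : ℝ, 0 < δ ∧ ENNReal.ofReal δ ≤ ε := by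
      refine ⟨(min 1 ε).toReal, ?_, ?_⟩
      · apply ENNReal.toReal_pos
        · exact (lt_min zero_lt_one hε).ne'
        · exact ne_top_of_le_ne_top ENNReal.one_ne_top (min_le_left _ _)
      · rw [ENNReal.ofReal_toReal (ne_top_of_le_ne_top ENNReal.one_ne_top (min_le_left _ _))]
        exact min_le_right _ _
    set C : ℝ := max (dist x x₀) |a - M - 1| + 1 with hC
    have hC0 : 0 < C := by positivity
    set t : ℝ := min 1 (δ / C) with htdef
    have ht0 : 0 < t := lt_min one_pos (by positivity)
    have ht1 : t ≤ 1 := min_le_left _ _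
    have htC : t * C ≤ δ := by
      have h1 : t ≤ δ / C := min_le_right _ _
      calc t * C ≤ (δ / C) * C := by nlinarith
        _ = δ := by field_simp
    set y : EuclideanSpace ℝ (Fin n) := (1 - t) • x + t • x₀ with hy
    have hyint : y ∈ interior Ω :=
      hΩconv.combo_self_interior_mem_interior hxΩ hx₀ (by linarith) ht0 (by ring)
    set b : ℝ := (1 - t) * a + t * M with hb
    have hvy : v y ≤ b := by
      have hm : ((1 - t) • ((x, a) : EuclideanSpace ℝ (Fin n) × ℝ)
          + t • ((x₀, M) : EuclideanSpace ℝ (Fin n) × ℝ)) ∈ F :=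
        hepiv.2 (Set.mem_setOf_eq ▸ ⟨hxΩ, hva⟩)
          (Set.mem_setOf_eq ▸ ⟨hx₀Ω, (abs_le.mp (hbdv x₀ hx₀Ω)).2⟩)
          (by linarith) ht0.le (by ring)
      simpa [hF, Prod.smul_fst, Prod.smul_snd, smul_eq_mul, hy, hb] using hm.2
    have hev : ∀ᶠ k in atTop, u k y < b + t :=
      (hlim y hyint).eventually_lt_const (by linarith)
    filter_upwards [hev] with k hk
    have hwE : ((y, b + t) : EuclideanSpace ℝ (Fin n) × ℝ) ∈ E k :=
      ⟨interior_subset hyint, hk.le⟩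
    have hd1 : dist x y ≤ δ := by
      have : dist x y = t * dist x x₀ := by
        rw [hy, dist_eq_norm]
        have hxy : x - ((1 - t) • x + t • x₀) = t • (x - x₀) := by module
        rw [hxy, norm_smul, Real.norm_eq_abs, abs_of_pos ht0, dist_eq_norm]
      rw [this]
      nlinarith [dist_nonneg (x := x) (y := x₀), le_max_left (dist x x₀) |a - M - 1|]
    have hd2 : dist a (b + t) ≤ δ := by
      have : dist a (b + t) = t * |a - M - 1| := by
        rw [Real.dist_eq, hb]
        rw [show a - ((1 - t) * a + t * M + t) = t * (a - M - 1) by ring, abs_mul,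
          abs_of_pos ht0]
      rw [this]
      nlinarith [abs_nonneg (a - M - 1), le_max_right (dist x x₀) |a - M - 1|]
    calc EMetric.infEdist ((x, a) : EuclideanSpace ℝ (Fin n) × ℝ) (E k)
        ≤ edist ((x, a) : EuclideanSpace ℝ (Fin n) × ℝ) (y, b + t) :=
          EMetric.infEdist_le_edist_of_mem hwE
      _ = ENNReal.ofReal (dist ((x, a) : EuclideanSpace ℝ (Fin n) × ℝ) (y, b + t)) :=
          edist_dist _ _
      _ ≤ ENNReal.ofReal δ := by
          apply ENNReal.ofReal_le_ofReal
          rw [Prod.dist_eq]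
          exact max_le hd1 hd2
      _ ≤ ε := hδε
  -- Part B : limits of points of `E k` (along subsequences) belong to `F`
  have keyB : ∀ z : EuclideanSpace ℝ (Fin n) × ℝ,
      liminf (fun k => EMetric.infEdist z (E k)) atTop = 0 → z ∈ F := by
    rintro ⟨x, a⟩ hz
    have hfreq : ∀ j : ℕ, ∃ᶠ k in atTop,
        EMetric.infEdist ((x, a) : EuclideanSpace ℝ (Fin n) × ℝ) (E k)
          < ENNReal.ofReal (1 / (j + 1)) := by
      intro j
      refine frequently_lt_of_liminf_lt (by isBoundedDefault) ?_
      rw [hz]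
      exact ENNReal.ofReal_pos.mpr (by positivity)
    obtain ⟨φ, hφmono, hφ⟩ := extraction_forall_of_frequently hfreq
    have hw : ∀ j : ℕ, ∃ w ∈ E (φ j),
        edist ((x, a) : EuclideanSpace ℝ (Fin n) × ℝ) w < ENNReal.ofReal (1 / (j + 1)) :=
      fun j => EMetric.infEdist_lt_iff.mp (hφ j)
    choose w hwE hwd using hw
    have hwd' : ∀ j : ℕ, dist (w j) ((x, a) : EuclideanSpace ℝ (Fin n) × ℝ) ≤ 1 / (j + 1) := by
      intro j
      rw [dist_comm]
      exact (edist_lt_ofReal.mp (hwd j)).le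
    have hwlim : Tendsto w atTop (nhds ((x, a) : EuclideanSpace ℝ (Fin n) × ℝ)) := by
      rw [tendsto_iff_dist_tendsto_zero]
      exact squeeze_zero (fun j => dist_nonneg) hwd' tendsto_one_div_add_atTop_nhds_zero_nat
    have hw1 : Tendsto (fun j => (w j).1) atTop (nhds x) :=
      (continuous_fst.tendsto _).comp hwlim
    have hw2 : Tendsto (fun j => (w j).2) atTop (nhds a) :=
      (continuous_snd.tendsto _).comp hwlim
    have hxΩ : x ∈ Ω :=
      hΩcomp.isClosed.mem_of_tendsto hw1 (Eventually.of_forall fun j => (hwE j).1)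
    have hkey : ∀ t : ℝ, 0 < t → t ≤ 1 →
        (((1 - t) • x + t • x₀, (1 - t) * a + t * M) : EuclideanSpace ℝ (Fin n) × ℝ) ∈ F := by
      intro t ht0 ht1
      set y : EuclideanSpace ℝ (Fin n) := (1 - t) • x + t • x₀ with hy
      have hyint : y ∈ interior Ω :=
        hΩconv.combo_self_interior_mem_interior hxΩ hx₀ (by linarith) ht0 (by ring)
      set zf : ℕ → EuclideanSpace ℝ (Fin n) :=
        fun j => x₀ + ((1 - t) / t) • (x - (w j).1) with hzf
      have hzlim : Tendsto zf atTop (nhds x₀) := by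
        have h0 : Tendsto (fun j => x - (w j).1) atTop (nhds (x - x)) :=
          tendsto_const_nhds.sub hw1
        rw [sub_self] at h0
        have h1 : Tendsto (fun j => ((1 - t) / t) • (x - (w j).1)) atTop
            (nhds (((1 - t) / t) • (0 : EuclideanSpace ℝ (Fin n)))) := h0.const_smul _
        have h2 : Tendsto zf atTop
            (nhds (x₀ + ((1 - t) / t) • (0 : EuclideanSpace ℝ (Fin n)))) :=
          (tendsto_const_nhds : Tendsto (fun _ : ℕ => x₀) atTop (nhds x₀)).add h1
        simpa using h2
      have hzint : ∀ᶠ j in atTop, zf j ∈ interior Ω :=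
        hzlim.eventually (isOpen_interior.eventually_mem hx₀)
      have hcomb : ∀ᶠ j in atTop, u (φ j) y ≤ (1 - t) * (w j).2 + t * M := by
        filter_upwards [hzint] with j hj
        have h2 : ((zf j, M) : EuclideanSpace ℝ (Fin n) × ℝ) ∈ E (φ j) :=
          ⟨interior_subset hj, (abs_le.mp (hbdu (φ j) _ (interior_subset hj))).2⟩
        have hm := (hepiu (φ j)).2 (hwE j) h2 (by linarith : (0:ℝ) ≤ 1 - t) ht0.le (by ring)
        have hyj : (1 - t) • (w j).1 + t • zf j = y := by
          rw [hzf, hy]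
          rw [smul_add, smul_smul, mul_div_cancel₀ _ ht0.ne']
          module
        have hm2 := hm.2
        simp only [Prod.fst_add, Prod.snd_add, Prod.smul_fst, Prod.smul_snd,
          smul_eq_mul] at hm2
        rwa [hyj] at hm2
      have hulim : Tendsto (fun j => u (φ j) y) atTop (nhds (v y)) :=
        (hlim y hyint).comp hφmono.tendsto_atTop
      have hrlim : Tendsto (fun j => (1 - t) * (w j).2 + t * M) atTop
          (nhds ((1 - t) * a + t * M)) :=
        (hw2.const_mul _).add_const _
      exact ⟨interior_subset hyint, le_of_tendsto_of_tendsto hulim hrlim hcomb⟩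
    -- let t → 0
    have hs : Tendsto (fun m : ℕ => (1 : ℝ) / (m + 1)) atTop (nhds 0) :=
      tendsto_one_div_add_atTop_nhds_zero_nat
    have hplim : Tendsto (fun m : ℕ =>
        (((1 - 1 / ((m : ℝ) + 1)) • x + (1 / ((m : ℝ) + 1)) • x₀,
          (1 - 1 / ((m : ℝ) + 1)) * a + (1 / ((m : ℝ) + 1)) * M) : EuclideanSpace ℝ (Fin n) × ℝ))
        atTop (nhds ((x, a) : EuclideanSpace ℝ (Fin n) × ℝ)) := by
      rw [Prod.tendsto_iff]
      constructor
      · have hc : Tendsto (fun _ : ℕ => (1 : ℝ)) atTop (nhds 1) := tendsto_const_nhds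
        have hx' : Tendsto (fun _ : ℕ => x) atTop (nhds x) := tendsto_const_nhds
        have hx0' : Tendsto (fun _ : ℕ => x₀) atTop (nhds x₀) := tendsto_const_nhds
        have := ((hc.sub hs).smul hx').add (hs.smul hx0')
        simpa using this
      · have hc : Tendsto (fun _ : ℕ => (1 : ℝ)) atTop (nhds 1) := tendsto_const_nhds
        have ha' : Tendsto (fun _ : ℕ => a) atTop (nhds a) := tendsto_const_nhds
        have hM' : Tendsto (fun _ : ℕ => M) atTop (nhds M) := tendsto_const_nhds
        have := ((hc.sub hs).mul ha').add (hs.mul hM')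
        simpa using this
    refine hepiv.1.mem_of_tendsto hplim (Eventually.of_forall fun m => ?_)
    have hm0 : (0 : ℝ) < 1 / ((m : ℝ) + 1) := by positivity
    have hm1 : (1 : ℝ) / ((m : ℝ) + 1) ≤ 1 := by
      rw [div_le_one (by positivity)]
      simp
    exact hkey _ hm0 hm1
  constructor
  · ext z
    simp only [Set.mem_setOf_eq]
    constructor
    · intro h
      refine keyB z ?_
      have h1 : liminf (fun k => EMetric.infEdist z (E k)) atTop ≤
          limsup (fun k => EMetric.infEdist z (E k)) atTop := liminf_le_limsup
      rw [h] at h1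
      exact le_antisymm h1 zero_le
    · intro h
      exact (keyA z h).limsup_eq
  · ext z
    simp only [Set.mem_setOf_eq]
    exact ⟨keyB z, fun h => (keyA z h).liminf_eq⟩
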